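/- Let k be a finite field, A a finite-dimensional k-algebra, and M, N finite-dimensional A-modules such that every short exact sequence of A-modules 0 → N → E → M → 0 splits (i.e., whenever f : N → E is an injective A-linear map into a finite-dimensional A-module E with E/f(N) ≅ M, the image of f is a direct summand of E). Then the number of A-submodules B of M ⊕ N with B ≅ N and (M ⊕ N)/B ≅ M is g^{M⊕N}_{M,N} = |Aut_A(M ⊕ N)| / (|Aut_A(M)| · |Aut_A(N)| · |Hom_A(M, N)|); that is, g^{M⊕N}_{M,N} · |Aut_A(M)| · |Aut_A(N)| · |Hom_A(M, N)| = |Aut_A(M ⊕ N)|. -/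

import Mathlib

section aux
variable {A G N : Type} [Ring A] [AddCommGroup G] [Module A G] [AddCommGroup N] [Module A N]

instance autAction : MulAction (G ≃ₗ[A] G) (N →ₗ[A] G) where
  smul g f := g.toLinearMap ∘ₗ f
  one_smul _ := rfl
  mul_smul _ _ _ := rfl

lemma autAction_smul_def (g : G ≃ₗ[A] G) (f : N →ₗ[A] G) : g • f = g.toLinearMap ∘ₗ f := rfl

end aux

section stab
variable {A M N : Type} [Ring A] [AddCommGroup M] [Module A M] [AddCommGroup N] [Module A N]

/-- The triangular automorphism of `M × N` attached to `(α, γ)`. -/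
def triEquiv (α : M ≃ₗ[A] M) (γ : M →ₗ[A] N) : (M × N) ≃ₗ[A] (M × N) := by
  refine LinearEquiv.ofLinear
    (LinearMap.prod (α.toLinearMap ∘ₗ LinearMap.fst A M N)
      (γ ∘ₗ LinearMap.fst A M N + LinearMap.snd A M N))
    (LinearMap.prod (α.symm.toLinearMap ∘ₗ LinearMap.fst A M N)
      (LinearMap.snd A M N - γ ∘ₗ α.symm.toLinearMap ∘ₗ LinearMap.fst A M N)) ?_ ?_ <;>
  · apply LinearMap.ext
    rintro ⟨m, n⟩
    simp

@[simp] lemma triEquiv_apply (α : M ≃ₗ[A] M) (γ : M →ₗ[A] N) (x : M × N) :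
    triEquiv α γ x = (α x.1, γ x.1 + x.2) := rfl

/-- The map from pairs to the stabilizer of `inr`. -/
lemma triEquiv_mem_stab (α : M ≃ₗ[A] M) (γ : M →ₗ[A] N) :
    triEquiv α γ • (LinearMap.inr A M N) = LinearMap.inr A M N := by
  apply LinearMap.ext
  intro n
  simp [autAction_smul_def]

lemma stab_card :
    Nat.card (MulAction.stabilizer ((M × N) ≃ₗ[A] (M × N)) (LinearMap.inr A M N)) =
      Nat.card (M ≃ₗ[A] M) * Nat.card (M →ₗ[A] N) := by
  rw [← Nat.card_prod]
  symm
  apply Nat.card_eq_of_bijective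
    (fun p : (M ≃ₗ[A] M) × (M →ₗ[A] N) => ⟨triEquiv p.1 p.2, triEquiv_mem_stab p.1 p.2⟩)
  constructor
  · rintro ⟨α, γ⟩ ⟨α', γ'⟩ h
    have h' : triEquiv α γ = triEquiv α' γ' := congrArg Subtype.val h
    have key : ∀ m : M, (α m, γ m) = (α' m, γ' m) := by
      intro m
      have := congrArg (fun e : (M × N) ≃ₗ[A] (M × N) => e (m, 0)) h'
      simpa using this
    refine Prod.ext (LinearEquiv.ext fun m => ?_) (LinearMap.ext fun m => ?_)
    · exact congrArg Prod.fst (key m)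
    · exact congrArg Prod.snd (key m)
  · rintro ⟨g, hg⟩
    have hg' : g.toLinearMap ∘ₗ LinearMap.inr A M N = LinearMap.inr A M N := hg
    have hginr : ∀ n : N, g (0, n) = (0, n) := fun n => congrFun (congrArg DFunLike.coe hg') n
    set α₀ : M →ₗ[A] M := LinearMap.fst A M N ∘ₗ g.toLinearMap ∘ₗ LinearMap.inl A M N with hα₀
    set γ : M →ₗ[A] N := LinearMap.snd A M N ∘ₗ g.toLinearMap ∘ₗ LinearMap.inl A M N with hγ
    have hge : ∀ m n, g (m, n) = (α₀ m, γ m + n) := by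
      intro m n
      have : (m, n) = ((m, 0) : M × N) + (0, n) := by simp
      rw [this, map_add, hginr n]
      have : g (m, 0) = (α₀ m, γ m) := by
        simp [hα₀, hγ]
      rw [this]
      simp
    have hαbij : Function.Bijective α₀ := by
      constructor
      · intro m m' hmm
        have : g (m, -γ m + γ m') = g (m', 0) := by
          rw [hge, hge, hmm]; simp
        have := g.injective this
        exact congrArg Prod.fst this
      · intro m'
        obtain ⟨⟨m, n⟩, hmn⟩ := g.surjective (m', 0)
        exact ⟨m, congrArg Prod.fst ((hge m n).symm.trans hmn)⟩
    refine ⟨(LinearEquiv.ofBijective α₀ hαbij, γ), ?_⟩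
    apply Subtype.ext
    apply LinearEquiv.toLinearMap_injective
    apply LinearMap.ext
    rintro ⟨m, n⟩
    simp [hge m n, LinearEquiv.ofBijective_apply]

end stab

section orbit
variable {A M N : Type} [Ring A] [AddCommGroup M] [Module A M] [AddCommGroup N] [Module A N]

/-- The quotient of `M × N` by the canonical copy of `N` is `M`. -/
noncomputable def quotInrEquiv : ((M × N) ⧸ LinearMap.range (LinearMap.inr A M N)) ≃ₗ[A] M :=
  (Submodule.quotEquivOfEq _ _ (LinearMap.range_inr A M N)).trans
    ((LinearMap.fst A M N).quotKerEquivOfSurjective Prod.fst_surjective)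

lemma smul_inr_prop (g : (M × N) ≃ₗ[A] (M × N)) :
    Function.Injective (g • LinearMap.inr A M N) ∧
      Nonempty (((M × N) ⧸ LinearMap.range (g • LinearMap.inr A M N)) ≃ₗ[A] M) := by
  constructor
  · rw [autAction_smul_def]
    exact g.injective.comp (LinearMap.inr_injective)
  · refine ⟨?_⟩
    refine ((Submodule.Quotient.equiv (LinearMap.range (LinearMap.inr A M N))
      (LinearMap.range (g • LinearMap.inr A M N)) g ?_).symm.trans quotInrEquiv)
    rw [autAction_smul_def, LinearMap.range_comp]

lemma mem_orbit_of (f : N →ₗ[A] M × N) (hinj : Function.Injective f)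
    (hq : Nonempty (((M × N) ⧸ LinearMap.range f) ≃ₗ[A] M))
    (C : Submodule A (M × N)) (hC : IsCompl (LinearMap.range f) C) :
    f ∈ MulAction.orbit ((M × N) ≃ₗ[A] (M × N)) (LinearMap.inr A M N) := by
  let eN : N ≃ₗ[A] LinearMap.range f := LinearEquiv.ofInjective f hinj
  let eC : M ≃ₗ[A] C :=
    (Classical.choice hq).symm.trans (Submodule.quotientEquivOfIsCompl _ C hC)
  rw [MulAction.mem_orbit_iff]
  refine ⟨(eC.prodCongr eN).trans
    (Submodule.prodEquivOfIsCompl C (LinearMap.range f) hC.symm), ?_⟩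
  rw [autAction_smul_def]
  apply LinearMap.ext
  intro n
  simp [eN, LinearEquiv.ofInjective_apply]

end orbit

section Wcount
variable {A M N : Type} [Ring A] [AddCommGroup M] [Module A M] [AddCommGroup N] [Module A N]

lemma W_card :
    Nat.card {f : N →ₗ[A] M × N // Function.Injective f ∧
        Nonempty (((M × N) ⧸ LinearMap.range f) ≃ₗ[A] M)} =
      Nat.card {B : Submodule A (M × N) //
        Nonempty (B ≃ₗ[A] N) ∧ Nonempty (((M × N) ⧸ B) ≃ₗ[A] M)} *
      Nat.card (N ≃ₗ[A] N) := by
  classical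
  rw [← Nat.card_prod]
  symm
  set S := {B : Submodule A (M × N) //
    Nonempty (B ≃ₗ[A] N) ∧ Nonempty (((M × N) ⧸ B) ≃ₗ[A] M)}
  have es : ∀ s : S, N ≃ₗ[A] s.1 := fun s => (Classical.choice s.2.1).symm
  have hrange : ∀ (s : S) (u : N ≃ₗ[A] N),
      LinearMap.range (s.1.subtype ∘ₗ ((u.trans (es s)) : N →ₗ[A] s.1)) = s.1 := by
    intro s u
    rw [LinearMap.range_comp, LinearEquiv.range, Submodule.map_top, Submodule.range_subtype]
  apply Nat.card_eq_of_bijective (fun p : S × (N ≃ₗ[A] N) =>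
    ⟨p.1.1.subtype ∘ₗ ((p.2.trans (es p.1)) : N →ₗ[A] p.1.1),
     (Subtype.val_injective.comp (p.2.trans (es p.1)).injective),
     ⟨(Submodule.quotEquivOfEq _ _ (hrange p.1 p.2)).trans (Classical.choice p.1.2.2)⟩⟩)
  constructor
  · rintro ⟨s, u⟩ ⟨s', u'⟩ h
    have h' : (s.1.subtype ∘ₗ ((u.trans (es s)) : N →ₗ[A] s.1)) =
        (s'.1.subtype ∘ₗ ((u'.trans (es s')) : N →ₗ[A] s'.1)) := congrArg Subtype.val h
    have hs : s = s' := by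
      apply Subtype.ext
      rw [← hrange s u, ← hrange s' u', h']
    subst hs
    refine Prod.ext rfl (LinearEquiv.toLinearMap_injective (LinearMap.ext fun n => ?_))
    have := congrFun (congrArg DFunLike.coe h') n
    simp only [LinearMap.coe_comp, Function.comp_apply, LinearEquiv.coe_coe,
      Submodule.coe_subtype] at this
    have h2 : (es s) (u n) = (es s) (u' n) := Subtype.ext this
    simpa using (es s).injective h2
  · rintro ⟨f, hinj, hq⟩
    set s : S := ⟨LinearMap.range f, ⟨(LinearEquiv.ofInjective f hinj).symm⟩, hq⟩
    refine ⟨(s, (LinearEquiv.ofInjective f hinj).trans (es s).symm), ?_⟩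
    apply Subtype.ext
    apply LinearMap.ext
    intro n
    simp [LinearEquiv.ofInjective_apply]

end Wcount

theorem stmt6 (k : Type) [Field k] [Fintype k]
    (A : Type) [Ring A] [Algebra k A] [FiniteDimensional k A]
    (M N : Type)
    [AddCommGroup M] [Module k M] [Module A M] [IsScalarTower k A M] [FiniteDimensional k M]
    [AddCommGroup N] [Module k N] [Module A N] [IsScalarTower k A N] [FiniteDimensional k N]
    (hsplit : ∀ (E : Type) [AddCommGroup E] [Module k E] [Module A E]
      [IsScalarTower k A E] [FiniteDimensional k E] (f : N →ₗ[A] E),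
      Function.Injective f → Nonempty ((E ⧸ LinearMap.range f) ≃ₗ[A] M) →
        ∃ C : Submodule A E, IsCompl (LinearMap.range f) C)
    (g : ℕ)
    (hg : g = Nat.card {B : Submodule A (M × N) //
      Nonempty (B ≃ₗ[A] N) ∧ Nonempty (((M × N) ⧸ B) ≃ₗ[A] M)}) :
    g * Nat.card (M ≃ₗ[A] M) * Nat.card (N ≃ₗ[A] N) * Nat.card (M →ₗ[A] N) =
      Nat.card ((M × N) ≃ₗ[A] (M × N)) := by
  haveI : Finite M := Module.finite_of_finite k
  haveI : Finite N := Module.finite_of_finite k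
  haveI : Finite ((M × N) ≃ₗ[A] (M × N)) :=
    Finite.of_injective (fun e => (e : M × N → M × N)) DFunLike.coe_injective
  set ι : N →ₗ[A] M × N := LinearMap.inr A M N with hι
  have horbit : MulAction.orbit ((M × N) ≃ₗ[A] (M × N)) ι =
      {f : N →ₗ[A] M × N | Function.Injective f ∧
        Nonempty (((M × N) ⧸ LinearMap.range f) ≃ₗ[A] M)} := by
    ext f
    constructor
    · rintro ⟨gg, rfl⟩
      exact smul_inr_prop gg
    · rintro ⟨h1, h2⟩
      obtain ⟨C, hC⟩ := hsplit (M × N) f h1 h2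
      exact mem_orbit_of f h1 h2 C hC
  have key := Nat.card_congr (MulAction.orbitProdStabilizerEquivGroup
    ((M × N) ≃ₗ[A] (M × N)) ι)
  rw [Nat.card_prod, horbit] at key
  rw [show (Nat.card {f : N →ₗ[A] M × N | Function.Injective f ∧
        Nonempty (((M × N) ⧸ LinearMap.range f) ≃ₗ[A] M)}) =
      Nat.card {f : N →ₗ[A] M × N // Function.Injective f ∧
        Nonempty (((M × N) ⧸ LinearMap.range f) ≃ₗ[A] M)} from rfl,
    W_card, stab_card, ← hg] at key
  rw [← key]
  ring
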